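/- Let $S\subset\mathbb{R}$ be compact, $g:S\to\mathbb{R}$ twice continuously differentiable on a neighborhood of $S$ with unique interior maximizer $\theta$, $g'(\theta)=0$, $g''$ continuous and $g''(\theta)\ne0$, and let $(g_n)$ be functions with $\alpha_n:=\sup_{y\in S}|g_n(y)-g(y)|\to0$. If $\hat\theta_n$ maximizes $g_n$ over $S$, then $(\hat\theta_n-\theta)^2=O(\alpha_n)$, i.e., there exist $C>0$ and $N$ such that $(\hat\theta_n-\theta)^2\le C\alpha_n$ for all $n\ge N$. -/

import Mathlib

open Set Filter

lemma taylor_right (U : Set ℝ) (hU : IsOpen U) (g : ℝ → ℝ) (hg : ContDiffOn ℝ 2 g U)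
    {θ y : ℝ} (hlt : θ < y) (hsub : Set.Icc θ y ⊆ U) :
    ∃ ξ ∈ Set.Ioo θ y, g y - g θ =
      deriv g θ * (y - θ) + deriv (deriv g) ξ * (y - θ) ^ 2 / 2 := by
  have hg' : ContDiffOn ℝ 1 (deriv g) U := hg.deriv_of_isOpen hU (by norm_num)
  have hgdiff : DifferentiableOn ℝ g U := hg.differentiableOn (by norm_num)
  have hg'diff : DifferentiableOn ℝ (deriv g) U := hg'.differentiableOn (by norm_num)
  have hud : UniqueDiffOn ℝ (Set.Icc θ y) := uniqueDiffOn_Icc hlt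
  have hdw : ∀ x ∈ Set.Icc θ y, derivWithin g (Set.Icc θ y) x = deriv g x := by
    intro x hx
    exact ((hgdiff x (hsub hx)).differentiableAt (hU.mem_nhds (hsub hx))).derivWithin (hud x hx)
  have hf : ContDiffOn ℝ 1 g (Set.Icc θ y) := (hg.mono hsub).of_le (by norm_num)
  have hf' : DifferentiableOn ℝ (iteratedDerivWithin 1 g (Set.Icc θ y)) (Set.Ioo θ y) := by
    apply DifferentiableOn.congr ((hg'diff.mono hsub).mono Set.Ioo_subset_Icc_self)
    intro x hx
    rw [iteratedDerivWithin_one,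
      hdw x (Set.Ioo_subset_Icc_self hx)]
  obtain ⟨ξ, hξ, h⟩ := taylor_mean_remainder_lagrange (n := 1) hlt.ne
    (by rwa [Set.uIcc_of_le hlt.le]) (by rwa [Set.uIcc_of_le hlt.le, Set.uIoo_of_le hlt.le])
  rw [Set.uIoo_of_le hlt.le] at hξ
  rw [Set.uIcc_of_le hlt.le] at h
  refine ⟨ξ, hξ, ?_⟩
  have h2 : iteratedDerivWithin (1+1) g (Set.Icc θ y) ξ = deriv (deriv g) ξ := by
    have hmem : Set.Icc θ y ∈ nhds ξ := by
      rw [← mem_interior_iff_mem_nhds, interior_Icc]; exact hξ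
    rw [iteratedDerivWithin_succ]
    rw [derivWithin_congr (fun x hx => by
        rw [iteratedDerivWithin_one, hdw x hx])
      (by rw [iteratedDerivWithin_one,
        hdw ξ (Set.Ioo_subset_Icc_self hξ)])]
    exact derivWithin_of_mem_nhds hmem
  have htay : taylorWithinEval g 1 (Set.Icc θ y) θ y = g θ + deriv g θ * (y - θ) := by
    rw [taylorWithinEval_succ, taylor_within_zero_eval]
    simp only [Nat.factorial_zero, Nat.cast_one, pow_one]
    rw [iteratedDerivWithin_one,
      hdw θ (Set.left_mem_Icc.2 hlt.le)]
    simp [smul_eq_mul]; ring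
  rw [htay, h2] at h
  norm_num [Nat.factorial] at h ⊢
  linarith

lemma quad_bound (U : Set ℝ) (hU : IsOpen U) (g : ℝ → ℝ) (hg : ContDiffOn ℝ 2 g U)
    (θ : ℝ) (hθU : θ ∈ U) (hcrit : deriv g θ = 0)
    (hg''cont : ContinuousOn (deriv (deriv g)) U) (hg''θ : deriv (deriv g) θ ≠ 0) :
    ∃ δ > 0, ∀ y, |y - θ| < δ →
      |deriv (deriv g) θ| / 4 * (y - θ) ^ 2 ≤ |g y - g θ| := by
  have hc : ContinuousAt (deriv (deriv g)) θ := hg''cont.continuousAt (hU.mem_nhds hθU)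
  obtain ⟨δ₁, hδ₁pos, hδ₁⟩ := Metric.continuousAt_iff.1 hc (|deriv (deriv g) θ| / 2)
    (by positivity)
  obtain ⟨δ₂, hδ₂pos, hδ₂⟩ := Metric.isOpen_iff.1 hU θ hθU
  refine ⟨min δ₁ δ₂, lt_min hδ₁pos hδ₂pos, ?_⟩
  set δ := min δ₁ δ₂ with hδ
  have hballU : ∀ x, |x - θ| < δ → x ∈ U := fun x hx =>
    hδ₂ (by simpa [Metric.mem_ball, Real.dist_eq] using hx.trans_le (min_le_right _ _))
  have hlow : ∀ x, |x - θ| < δ → |deriv (deriv g) θ| / 2 ≤ |deriv (deriv g) x| := by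
    intro x hx
    have := hδ₁ (show dist x θ < δ₁ by
      simpa [Real.dist_eq] using hx.trans_le (min_le_left _ _))
    rw [Real.dist_eq] at this
    have := abs_sub_abs_le_abs_sub (deriv (deriv g) θ) (deriv (deriv g) x)
    rw [abs_sub_comm] at this
    linarith [abs_sub_abs_le_abs_sub (deriv (deriv g) θ) (deriv (deriv g) x)]
  intro y hy
  -- key: exists ζ with |ζ - θ| < δ and g y - g θ = g'' ζ * (y - θ)^2 / 2
  have key : ∃ ζ, |ζ - θ| < δ ∧ g y - g θ = deriv (deriv g) ζ * (y - θ) ^ 2 / 2 := by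
    rcases lt_trichotomy θ y with hlt | heq | hgt
    · have hsub : Set.Icc θ y ⊆ U := by
        intro x hx
        exact hballU x (by
          rw [abs_sub_lt_iff]
          constructor
          · have : y - θ < δ := by rwa [abs_of_pos (by linarith)] at hy
            linarith [hx.1, hx.2]
          · linarith [hx.1, lt_min hδ₁pos hδ₂pos])
      obtain ⟨ξ, hξ, h⟩ := taylor_right U hU g hg hlt hsub
      refine ⟨ξ, ?_, by rw [h, hcrit]; ring⟩
      rw [abs_of_pos (by linarith [hξ.1])]
      have : y - θ < δ := by rwa [abs_of_pos (by linarith)] at hy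
      linarith [hξ.2]
    · exact ⟨θ, by rw [sub_self, abs_zero]; exact lt_min hδ₁pos hδ₂pos, by rw [heq]; ring⟩
    · -- reflection
      set G : ℝ → ℝ := fun t => g (2 * θ - t) with hG
      set V : Set ℝ := (fun t => 2 * θ - t) ⁻¹' U with hV
      have hVopen : IsOpen V := hU.preimage (by continuity)
      have hGc : ContDiffOn ℝ 2 G V :=
        hg.comp ((contDiff_const.sub contDiff_id).contDiffOn) (fun x hx => hx)
      have hgdiff : DifferentiableOn ℝ g U := hg.differentiableOn (by norm_num)
      have hg' : ContDiffOn ℝ 1 (deriv g) U := hg.deriv_of_isOpen hU (by norm_num)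
      have hg'diff : DifferentiableOn ℝ (deriv g) U := hg'.differentiableOn (by norm_num)
      have hder : ∀ t ∈ V, deriv G t = -deriv g (2 * θ - t) := by
        intro t ht
        have h1 : HasDerivAt (fun t => 2 * θ - t) (-1 : ℝ) t := by
          simpa using (hasDerivAt_id t).const_sub (2*θ)
        have h2 : HasDerivAt g (deriv g (2 * θ - t)) (2 * θ - t) :=
          ((hgdiff _ ht).differentiableAt (hU.mem_nhds ht)).hasDerivAt
        have := (h2.comp t h1).deriv
        simpa [hG, Function.comp_def] using this
      have hder2 : ∀ t ∈ V, deriv (deriv G) t = deriv (deriv g) (2 * θ - t) := by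
        intro t ht
        have hev : deriv G =ᶠ[nhds t] fun s => -deriv g (2 * θ - s) := by
          filter_upwards [hVopen.mem_nhds ht] with s hs using hder s hs
        rw [hev.deriv_eq]
        have h1 : HasDerivAt (fun t => 2 * θ - t) (-1 : ℝ) t := by
          simpa using (hasDerivAt_id t).const_sub (2*θ)
        have h2 : HasDerivAt (deriv g) (deriv (deriv g) (2 * θ - t)) (2 * θ - t) :=
          ((hg'diff _ ht).differentiableAt (hU.mem_nhds ht)).hasDerivAt
        have := ((h2.comp t h1).neg).deriv
        simpa [Function.comp_def] using this
      have hlt' : θ < 2 * θ - y := by linarith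
      have hyd : θ - y < δ := by rw [abs_sub_comm] at hy; rwa [abs_of_pos (by linarith)] at hy
      have hsub : Set.Icc θ (2 * θ - y) ⊆ V := by
        intro x hx
        show 2 * θ - x ∈ U
        apply hballU
        rw [abs_sub_lt_iff]
        constructor
        · linarith [hx.1, lt_min hδ₁pos hδ₂pos]
        · linarith [hx.2]
      obtain ⟨ξ, hξ, h⟩ := taylor_right V hVopen G hGc hlt' hsub
      have hθV : θ ∈ V := by
        show 2 * θ - θ ∈ U; simpa [two_mul] using hθU
      have hdGθ : deriv G θ = 0 := by
        rw [hder θ hθV]; simp [show 2 * θ - θ = θ by ring, hcrit]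
      have hGθ : G θ = g θ := by simp [hG, show 2 * θ - θ = θ by ring]
      have hGy : G (2 * θ - y) = g y := by simp [hG]
      refine ⟨2 * θ - ξ, ?_, ?_⟩
      · rw [abs_sub_lt_iff]
        constructor
        · linarith [hξ.1]
        · linarith [hξ.2]
      · rw [hGθ, hGy, hdGθ] at h
        rw [hder2 ξ (hsub (Set.Ioo_subset_Icc_self hξ))] at h
        rw [h]; ring
  obtain ⟨ζ, hζ, hEq⟩ := key
  rw [hEq, abs_div, abs_mul, abs_pow, sq_abs]
  have h1 := hlow ζ hζ
  have h2 : (0:ℝ) ≤ (y - θ) ^ 2 := sq_nonneg _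
  rw [show |(2:ℝ)| = 2 by norm_num]
  rw [div_eq_mul_inv, div_eq_mul_inv]
  nlinarith [abs_nonneg (deriv (deriv g) θ)]

/-- Rate of convergence of the argmax estimator: `(θ̂ₙ - θ)² = O(αₙ)` where
`αₙ` is the uniform deviation of `gₙ` from `g` over `S`. -/
theorem argmax_rate (a b : ℝ) (hab : a < b) (U : Set ℝ) (hU : IsOpen U)
    (hSU : Set.Icc a b ⊆ U)
    (g : ℝ → ℝ) (hg : ContDiffOn ℝ 2 g U)
    (θ : ℝ) (hθ : θ ∈ interior (Set.Icc a b))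
    (hmax : ∀ y ∈ Set.Icc a b, y ≠ θ → g y < g θ)
    (hcrit : deriv g θ = 0)
    (hg''cont : ContinuousOn (deriv (deriv g)) U)
    (hg''θ : deriv (deriv g) θ ≠ 0)
    (gn : ℕ → ℝ → ℝ) (α : ℕ → ℝ)
    (hα : ∀ n, IsLUB ((fun y => |gn n y - g y|) '' Set.Icc a b) (α n))
    (hα0 : Filter.Tendsto α Filter.atTop (nhds 0))
    (θn : ℕ → ℝ) (hθn : ∀ n, θn n ∈ Set.Icc a b)
    (hmaxn : ∀ n, ∀ y ∈ Set.Icc a b, gn n y ≤ gn n (θn n)) :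
    ∃ C > 0, ∃ N : ℕ, ∀ n ≥ N, (θn n - θ) ^ 2 ≤ C * α n := by
  have hθIcc : θ ∈ Set.Icc a b := interior_subset hθ
  have hθU : θ ∈ U := hSU hθIcc
  obtain ⟨δ, hδpos, hquad⟩ := quad_bound U hU g hg θ hθU hcrit hg''cont hg''θ
  set m : ℝ := |deriv (deriv g) θ| / 4 with hm
  have hmpos : 0 < m := by positivity
  -- bound on α n
  have hαb : ∀ n y, y ∈ Set.Icc a b → |gn n y - g y| ≤ α n := fun n y hy =>
    (hα n).1 ⟨y, hy, rfl⟩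
  -- gap bound
  have hgap : ∀ n, g θ - g (θn n) ≤ 2 * α n := by
    intro n
    have h1 := abs_le.1 (hαb n θ hθIcc)
    have h2 := abs_le.1 (hαb n (θn n) (hθn n))
    have h3 := hmaxn n θ hθIcc
    linarith [h1.1, h1.2, h2.1, h2.2]
  have hle : ∀ n, g (θn n) ≤ g θ := by
    intro n
    by_cases h : θn n = θ
    · rw [h]
    · exact (hmax _ (hθn n) h).le
  -- consistency: eventually |θn n - θ| < δ
  have hcons : ∃ N : ℕ, ∀ n ≥ N, |θn n - θ| < δ := by
    set K : Set ℝ := Set.Icc a b ∩ {y | δ ≤ |y - θ|} with hK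
    have hKcl : IsClosed {y : ℝ | δ ≤ |y - θ|} :=
      isClosed_le continuous_const (by continuity)
    have hKcomp : IsCompact K := isCompact_Icc.inter_right hKcl
    by_cases hne : K.Nonempty
    · have hgc : ContinuousOn g (Set.Icc a b) :=
        (hg.continuousOn).mono hSU
      obtain ⟨y₀, hy₀K, hy₀max⟩ := hKcomp.exists_isMaxOn hne
        (hgc.mono (Set.inter_subset_left))
      have hy₀ne : y₀ ≠ θ := by
        intro h
        have := hy₀K.2
        rw [h] at this
        simp at this
        linarith [this]
      have hε : 0 < g θ - g y₀ := sub_pos.2 (hmax _ hy₀K.1 hy₀ne)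
      have hev : ∀ᶠ n in atTop, α n < (g θ - g y₀) / 2 :=
        hα0.eventually (gt_mem_nhds (by positivity))
      obtain ⟨N, hN⟩ := eventually_atTop.1 hev
      refine ⟨N, fun n hn => ?_⟩
      by_contra hcon
      push_neg at hcon
      have hmem : θn n ∈ K := ⟨hθn n, hcon⟩
      have := hy₀max hmem
      have h1 := hgap n
      have h2 := hN n hn
      simp only [Set.mem_setOf_eq] at this
      linarith
    · refine ⟨0, fun n _ => ?_⟩
      by_contra hcon
      push_neg at hcon
      exact hne ⟨θn n, hθn n, hcon⟩
  obtain ⟨N, hN⟩ := hcons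
  refine ⟨2 / m, by positivity, N, fun n hn => ?_⟩
  have hq := hquad (θn n) (hN n hn)
  have habs : |g (θn n) - g θ| = g θ - g (θn n) := by
    rw [abs_of_nonpos (by linarith [hle n]), neg_sub]
  rw [habs] at hq
  have := hgap n
  rw [div_mul_eq_mul_div, le_div_iff₀ hmpos]
  nlinarith
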